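/- Let p ≥ 2 be an integer and let G = Θ_{p,p,p+2}. Then for every vertex a of G there exist vertices b and c of G such that the set S = {a, b, c} is a vertex metric generator of G. -/

import Mathlib

/-- Vertices of the Θ-graph `Θ_{p,q,r}`: the two branching vertices `u` and `v`,
together with the internal vertices of the three `u`–`v` paths of lengths `p`, `q`, `r`.
`a i` is the internal vertex `u_{i+1}` of the first path, `b i` is `v_{i+1}` of the
second path, and `c i` is `w_{i+1}` of the third path. -/
inductive ThetaVert (p q r : ℕ) : Type where
  | u : ThetaVert p q r
  | v : ThetaVert p q r
  | a : Fin (p - 1) → ThetaVert p q r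
  | b : Fin (q - 1) → ThetaVert p q r
  | c : Fin (r - 1) → ThetaVert p q r
  deriving DecidableEq

/-- Base adjacency relation for the Θ-graph (one direction of each edge). -/
def thetaRel (p q r : ℕ) : ThetaVert p q r → ThetaVert p q r → Prop
  | .u, .v => p = 1 ∨ q = 1 ∨ r = 1
  | .u, .a i => (i : ℕ) = 0
  | .u, .b i => (i : ℕ) = 0
  | .u, .c i => (i : ℕ) = 0
  | .a i, .v => (i : ℕ) = p - 2
  | .b i, .v => (i : ℕ) = q - 2
  | .c i, .v => (i : ℕ) = r - 2
  | .a i, .a j => (j : ℕ) = (i : ℕ) + 1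
  | .b i, .b j => (j : ℕ) = (i : ℕ) + 1
  | .c i, .c j => (j : ℕ) = (i : ℕ) + 1
  | _, _ => False

/-- The Θ-graph `Θ_{p,q,r}`. -/
def thetaGraph (p q r : ℕ) : SimpleGraph (ThetaVert p q r) :=
  SimpleGraph.fromRel (thetaRel p q r)

/-- The vertex `u_i` (for `0 ≤ i ≤ p`) on the first path of `Θ_{p,q,r}`. -/
def uV (p q r : ℕ) (i : ℕ) : ThetaVert p q r :=
  if h : 0 < i ∧ i < p then ThetaVert.a ⟨i - 1, by omega⟩
  else if i = 0 then ThetaVert.u else ThetaVert.v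

/-- The vertex `v_i` (for `0 ≤ i ≤ q`) on the second path of `Θ_{p,q,r}`. -/
def vV (p q r : ℕ) (i : ℕ) : ThetaVert p q r :=
  if h : 0 < i ∧ i < q then ThetaVert.b ⟨i - 1, by omega⟩
  else if i = 0 then ThetaVert.u else ThetaVert.v

/-- The vertex `w_i` (for `0 ≤ i ≤ r`) on the third path of `Θ_{p,q,r}`. -/
def wV (p q r : ℕ) (i : ℕ) : ThetaVert p q r :=
  if h : 0 < i ∧ i < r then ThetaVert.c ⟨i - 1, by omega⟩
  else if i = 0 then ThetaVert.u else ThetaVert.v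

/-- `S` is a vertex metric generator of `G`: every pair of distinct vertices is
distinguished by some vertex of `S`. -/
def IsVertexMetricGenerator {V : Type*} (G : SimpleGraph V) (S : Set V) : Prop :=
  ∀ x x' : V, x ≠ x' → ∃ s ∈ S, G.dist s x ≠ G.dist s x'

/-- The vertex metric dimension of `G`: the least cardinality of a vertex metric generator. -/
noncomputable def vertexMetricDim {V : Type*} (G : SimpleGraph V) : ℕ :=
  sInf {n : ℕ | ∃ S : Finset V, S.card = n ∧ IsVertexMetricGenerator G ↑S}

/-- Distance from a vertex `x` to an edge `e`: the minimum of the distances to its endpoints. -/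
noncomputable def edgeDist {V : Type*} (G : SimpleGraph V) (x : V) (e : Sym2 V) : ℕ :=
  Sym2.lift ⟨fun y z => min (G.dist x y) (G.dist x z), fun _ _ => min_comm _ _⟩ e

/-- `S` is an edge metric generator of `G`: every pair of distinct edges is
distinguished by some vertex of `S`. -/
def IsEdgeMetricGenerator {V : Type*} (G : SimpleGraph V) (S : Set V) : Prop :=
  ∀ e ∈ G.edgeSet, ∀ f ∈ G.edgeSet, e ≠ f → ∃ s ∈ S, edgeDist G s e ≠ edgeDist G s f

/-- The edge metric dimension of `G`: the least cardinality of an edge metric generator. -/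
noncomputable def edgeMetricDim {V : Type*} (G : SimpleGraph V) : ℕ :=
  sInf {n : ℕ | ∃ S : Finset V, S.card = n ∧ IsEdgeMetricGenerator G ↑S}

namespace ThetaPPP2

open SimpleGraph

/-- Distance to `u`. -/
def dU (p : ℕ) : ThetaVert p p (p + 2) → ℕ
  | .u => 0
  | .v => p
  | .a i => i + 1
  | .b i => i + 1
  | .c i => i + 1

/-- Distance to `v`. -/
def dV (p : ℕ) : ThetaVert p p (p + 2) → ℕ
  | .u => p
  | .v => 0
  | .a i => p - 1 - i
  | .b i => p - 1 - i
  | .c i => p + 1 - i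

/-- Path identifier. -/
def pid (p : ℕ) : ThetaVert p p (p + 2) → ℕ
  | .u => 3
  | .v => 4
  | .a _ => 0
  | .b _ => 1
  | .c _ => 2

/-- Explicit distance function on `Θ_{p,p,p+2}`. -/
def D (p : ℕ) (x y : ThetaVert p p (p + 2)) : ℕ :=
  if pid p x = pid p y then (dU p x - dU p y) + (dU p y - dU p x)
  else min (dU p x + dU p y) (dV p x + dV p y)

lemma D_self (p : ℕ) (x : ThetaVert p p (p + 2)) : D p x x = 0 := by
  simp [D]

set_option maxHeartbeats 1600000 in
lemma D_lip (p : ℕ) (hp : 2 ≤ p) (s x y : ThetaVert p p (p + 2))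
    (h : (thetaGraph p p (p + 2)).Adj x y) : D p x s ≤ D p y s + 1 := by
  rw [thetaGraph, SimpleGraph.fromRel_adj] at h
  obtain ⟨hne, h⟩ := h
  cases x <;> cases y <;> cases s <;>
    simp_all [thetaRel, D, dU, dV, pid, Fin.ext_iff, -Fin.val_eq_zero_iff] <;> omega

variable {p : ℕ}

lemma uV_zero : uV p p (p + 2) 0 = ThetaVert.u := by simp [uV]

lemma uV_last (hp : 2 ≤ p) : uV p p (p + 2) p = ThetaVert.v := by
  rw [uV, dif_neg (by omega), if_neg (by omega)]

lemma uV_a (i : Fin (p - 1)) : uV p p (p + 2) ((i : ℕ) + 1) = ThetaVert.a i := by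
  have hi := i.isLt
  rw [uV, dif_pos ⟨by omega, by omega⟩]
  congr 1

lemma vV_zero : vV p p (p + 2) 0 = ThetaVert.u := by simp [vV]

lemma vV_last (hp : 2 ≤ p) : vV p p (p + 2) p = ThetaVert.v := by
  rw [vV, dif_neg (by omega), if_neg (by omega)]

lemma vV_b (i : Fin (p - 1)) : vV p p (p + 2) ((i : ℕ) + 1) = ThetaVert.b i := by
  have hi := i.isLt
  rw [vV, dif_pos ⟨by omega, by omega⟩]
  congr 1

lemma wV_zero : wV p p (p + 2) 0 = ThetaVert.u := by simp [wV]

lemma wV_last : wV p p (p + 2) (p + 2) = ThetaVert.v := by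
  rw [wV, dif_neg (by omega), if_neg (by omega)]

lemma wV_c (i : Fin (p + 2 - 1)) : wV p p (p + 2) ((i : ℕ) + 1) = ThetaVert.c i := by
  have hi := i.isLt
  rw [wV, dif_pos ⟨by omega, by omega⟩]
  congr 1

lemma uV_adj (hp : 2 ≤ p) {i : ℕ} (hi : i < p) :
    (thetaGraph p p (p + 2)).Adj (uV p p (p + 2) i) (uV p p (p + 2) (i + 1)) := by
  rw [thetaGraph, SimpleGraph.fromRel_adj]
  rcases Nat.eq_zero_or_pos i with rfl | h0
  · rw [uV_zero, show (0 + 1) = ((⟨0, by omega⟩ : Fin (p - 1)) : ℕ) + 1 from rfl,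
      uV_a ⟨0, by omega⟩]
    exact ⟨by simp, Or.inl rfl⟩
  · have e1 : uV p p (p + 2) i = ThetaVert.a ⟨i - 1, by omega⟩ := by
      have := uV_a (p := p) ⟨i - 1, by omega⟩
      rwa [show ((⟨i - 1, by omega⟩ : Fin (p - 1)) : ℕ) + 1 = i from by simp; omega] at this
    rcases Nat.lt_or_ge (i + 1) p with h1 | h1
    · have e2 : uV p p (p + 2) (i + 1) = ThetaVert.a ⟨i, by omega⟩ := by
        exact uV_a ⟨i, by omega⟩
      rw [e1, e2]
      refine ⟨by simp only [ne_eq, ThetaVert.a.injEq, Fin.mk.injEq]; omega, Or.inl ?_⟩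
      show (i : ℕ) = i - 1 + 1
      omega
    · have e2 : uV p p (p + 2) (i + 1) = ThetaVert.v := by
        rw [show i + 1 = p from by omega]; exact uV_last hp
      rw [e1, e2]
      exact ⟨by simp, Or.inl (by show i - 1 = p - 2; omega)⟩

lemma vV_adj (hp : 2 ≤ p) {i : ℕ} (hi : i < p) :
    (thetaGraph p p (p + 2)).Adj (vV p p (p + 2) i) (vV p p (p + 2) (i + 1)) := by
  rw [thetaGraph, SimpleGraph.fromRel_adj]
  rcases Nat.eq_zero_or_pos i with rfl | h0
  · rw [vV_zero, show (0 + 1) = ((⟨0, by omega⟩ : Fin (p - 1)) : ℕ) + 1 from rfl,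
      vV_b ⟨0, by omega⟩]
    exact ⟨by simp, Or.inl rfl⟩
  · have e1 : vV p p (p + 2) i = ThetaVert.b ⟨i - 1, by omega⟩ := by
      have := vV_b (p := p) ⟨i - 1, by omega⟩
      rwa [show ((⟨i - 1, by omega⟩ : Fin (p - 1)) : ℕ) + 1 = i from by simp; omega] at this
    rcases Nat.lt_or_ge (i + 1) p with h1 | h1
    · have e2 : vV p p (p + 2) (i + 1) = ThetaVert.b ⟨i, by omega⟩ := by
        exact vV_b ⟨i, by omega⟩
      rw [e1, e2]
      refine ⟨by simp only [ne_eq, ThetaVert.b.injEq, Fin.mk.injEq]; omega, Or.inl ?_⟩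
      show (i : ℕ) = i - 1 + 1
      omega
    · have e2 : vV p p (p + 2) (i + 1) = ThetaVert.v := by
        rw [show i + 1 = p from by omega]; exact vV_last hp
      rw [e1, e2]
      exact ⟨by simp, Or.inl (by show i - 1 = p - 2; omega)⟩

lemma wV_adj (hp : 2 ≤ p) {i : ℕ} (hi : i < p + 2) :
    (thetaGraph p p (p + 2)).Adj (wV p p (p + 2) i) (wV p p (p + 2) (i + 1)) := by
  rw [thetaGraph, SimpleGraph.fromRel_adj]
  rcases Nat.eq_zero_or_pos i with rfl | h0
  · rw [wV_zero, show (0 + 1) = ((⟨0, by omega⟩ : Fin (p + 2 - 1)) : ℕ) + 1 from rfl,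
      wV_c ⟨0, by omega⟩]
    exact ⟨by simp, Or.inl rfl⟩
  · have e1 : wV p p (p + 2) i = ThetaVert.c ⟨i - 1, by omega⟩ := by
      have := wV_c (p := p) ⟨i - 1, by omega⟩
      rwa [show ((⟨i - 1, by omega⟩ : Fin (p + 2 - 1)) : ℕ) + 1 = i from by simp; omega] at this
    rcases Nat.lt_or_ge (i + 1) (p + 2) with h1 | h1
    · have e2 : wV p p (p + 2) (i + 1) = ThetaVert.c ⟨i, by omega⟩ := by
        exact wV_c ⟨i, by omega⟩
      rw [e1, e2]
      refine ⟨by simp only [ne_eq, ThetaVert.c.injEq, Fin.mk.injEq]; omega, Or.inl ?_⟩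
      show (i : ℕ) = i - 1 + 1
      omega
    · have e2 : wV p p (p + 2) (i + 1) = ThetaVert.v := by
        rw [show i + 1 = p + 2 from by omega]; exact wV_last
      rw [e1, e2]
      exact ⟨by simp, Or.inl (by show i - 1 = p + 2 - 2; omega)⟩


open SimpleGraph in
/-- A walk of length `n` along the first path from `u_i` to `u_{i+n}`. -/
def segU (hp : 2 ≤ p) : (n i : ℕ) → i + n ≤ p →
    {w : (thetaGraph p p (p + 2)).Walk (uV p p (p + 2) i) (uV p p (p + 2) (i + n)) //
      w.length = n}
  | 0, i, _ => ⟨Walk.nil.copy rfl (by simp), by simp⟩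
  | n + 1, i, h =>
    let s := segU hp n (i + 1) (by omega)
    ⟨Walk.cons (uV_adj hp (by omega))
      (s.1.copy rfl (by rw [show i + 1 + n = i + (n + 1) from by omega])),
     by simp [s.2]⟩

open SimpleGraph in
/-- A walk of length `n` along the second path from `v_i` to `v_{i+n}`. -/
def segV (hp : 2 ≤ p) : (n i : ℕ) → i + n ≤ p →
    {w : (thetaGraph p p (p + 2)).Walk (vV p p (p + 2) i) (vV p p (p + 2) (i + n)) //
      w.length = n}
  | 0, i, _ => ⟨Walk.nil.copy rfl (by simp), by simp⟩
  | n + 1, i, h =>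
    let s := segV hp n (i + 1) (by omega)
    ⟨Walk.cons (vV_adj hp (by omega))
      (s.1.copy rfl (by rw [show i + 1 + n = i + (n + 1) from by omega])),
     by simp [s.2]⟩

open SimpleGraph in
/-- A walk of length `n` along the third path from `w_i` to `w_{i+n}`. -/
def segW (hp : 2 ≤ p) : (n i : ℕ) → i + n ≤ p + 2 →
    {w : (thetaGraph p p (p + 2)).Walk (wV p p (p + 2) i) (wV p p (p + 2) (i + n)) //
      w.length = n}
  | 0, i, _ => ⟨Walk.nil.copy rfl (by simp), by simp⟩
  | n + 1, i, h =>
    let s := segW hp n (i + 1) (by omega)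
    ⟨Walk.cons (wV_adj hp (by omega))
      (s.1.copy rfl (by rw [show i + 1 + n = i + (n + 1) from by omega])),
     by simp [s.2]⟩

open SimpleGraph in
/-- A walk from `u` to any vertex, of length `dU`. -/
def wu (hp : 2 ≤ p) : (x : ThetaVert p p (p + 2)) →
    {w : (thetaGraph p p (p + 2)).Walk ThetaVert.u x // w.length = dU p x}
  | .u => ⟨Walk.nil, rfl⟩
  | .v =>
    let s := segU hp p 0 (by omega)
    ⟨s.1.copy uV_zero (by rw [Nat.zero_add]; exact uV_last hp), by simp [s.2, dU]⟩
  | .a i =>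
    let s := segU hp ((i : ℕ) + 1) 0 (by have := i.isLt; omega)
    ⟨s.1.copy uV_zero (by rw [Nat.zero_add]; exact uV_a i), by simp [s.2, dU]⟩
  | .b i =>
    let s := segV hp ((i : ℕ) + 1) 0 (by have := i.isLt; omega)
    ⟨s.1.copy vV_zero (by rw [Nat.zero_add]; exact vV_b i), by simp [s.2, dU]⟩
  | .c i =>
    let s := segW hp ((i : ℕ) + 1) 0 (by have := i.isLt; omega)
    ⟨s.1.copy wV_zero (by rw [Nat.zero_add]; exact wV_c i), by simp [s.2, dU]⟩

open SimpleGraph in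
/-- A walk from `v` to any vertex, of length `dV`. -/
def wv (hp : 2 ≤ p) : (x : ThetaVert p p (p + 2)) →
    {w : (thetaGraph p p (p + 2)).Walk ThetaVert.v x // w.length = dV p x}
  | .v => ⟨Walk.nil, rfl⟩
  | .u => ⟨(wu hp .v).1.reverse, by simp [(wu hp .v).2, dU, dV]⟩
  | .a i =>
    let s := segU hp (p - 1 - (i : ℕ)) ((i : ℕ) + 1) (by have := i.isLt; omega)
    ⟨(s.1.copy (uV_a i) (by rw [show (i : ℕ) + 1 + (p - 1 - (i : ℕ)) = p from by
        have := i.isLt; omega]; exact uV_last hp)).reverse,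
     by simp [s.2, dV]⟩
  | .b i =>
    let s := segV hp (p - 1 - (i : ℕ)) ((i : ℕ) + 1) (by have := i.isLt; omega)
    ⟨(s.1.copy (vV_b i) (by rw [show (i : ℕ) + 1 + (p - 1 - (i : ℕ)) = p from by
        have := i.isLt; omega]; exact vV_last hp)).reverse,
     by simp [s.2, dV]⟩
  | .c i =>
    let s := segW hp (p + 1 - (i : ℕ)) ((i : ℕ) + 1) (by have := i.isLt; omega)
    ⟨(s.1.copy (wV_c i) (by rw [show (i : ℕ) + 1 + (p + 1 - (i : ℕ)) = p + 2 from by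
        have := i.isLt; omega]; exact wV_last)).reverse,
     by simp [s.2, dV]⟩

lemma reach (hp : 2 ≤ p) (x y : ThetaVert p p (p + 2)) :
    (thetaGraph p p (p + 2)).Reachable x y :=
  ⟨(wu hp x).1.reverse.append (wu hp y).1⟩

lemma bound1 (hp : 2 ≤ p) (x y : ThetaVert p p (p + 2)) :
    (thetaGraph p p (p + 2)).dist x y ≤ dU p x + dU p y := by
  have h := SimpleGraph.dist_le ((wu hp x).1.reverse.append (wu hp y).1)
  simpa [(wu hp x).2, (wu hp y).2] using h

lemma bound2 (hp : 2 ≤ p) (x y : ThetaVert p p (p + 2)) :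
    (thetaGraph p p (p + 2)).dist x y ≤ dV p x + dV p y := by
  have h := SimpleGraph.dist_le ((wv hp x).1.reverse.append (wv hp y).1)
  simpa [(wv hp x).2, (wv hp y).2] using h

lemma distAA (hp : 2 ≤ p) (i j : Fin (p - 1)) :
    (thetaGraph p p (p + 2)).dist (ThetaVert.a i) (ThetaVert.a j) ≤
      ((i : ℕ) - (j : ℕ)) + ((j : ℕ) - (i : ℕ)) := by
  have hi := i.isLt; have hj := j.isLt
  rcases le_total (i : ℕ) (j : ℕ) with hle | hle
  · have s := segU hp ((j : ℕ) - (i : ℕ)) ((i : ℕ) + 1) (by omega)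
    have h := SimpleGraph.dist_le (s.1.copy (uV_a i)
      ((congrArg (uV p p (p + 2))
        (show (i : ℕ) + 1 + ((j : ℕ) - (i : ℕ)) = (j : ℕ) + 1 from by omega)).trans
        (uV_a j)))
    rw [SimpleGraph.Walk.length_copy, s.2] at h
    omega
  · have s := segU hp ((i : ℕ) - (j : ℕ)) ((j : ℕ) + 1) (by omega)
    have h := SimpleGraph.dist_le ((s.1.copy (uV_a j)
      ((congrArg (uV p p (p + 2))
        (show (j : ℕ) + 1 + ((i : ℕ) - (j : ℕ)) = (i : ℕ) + 1 from by omega)).trans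
        (uV_a i))).reverse)
    rw [SimpleGraph.Walk.length_reverse, SimpleGraph.Walk.length_copy, s.2] at h
    have h2 : (thetaGraph p p (p + 2)).dist (ThetaVert.a i) (ThetaVert.a j) =
        (thetaGraph p p (p + 2)).dist (ThetaVert.a j) (ThetaVert.a i) :=
      SimpleGraph.dist_comm
    omega

lemma distBB (hp : 2 ≤ p) (i j : Fin (p - 1)) :
    (thetaGraph p p (p + 2)).dist (ThetaVert.b i) (ThetaVert.b j) ≤
      ((i : ℕ) - (j : ℕ)) + ((j : ℕ) - (i : ℕ)) := by
  have hi := i.isLt; have hj := j.isLt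
  rcases le_total (i : ℕ) (j : ℕ) with hle | hle
  · have s := segV hp ((j : ℕ) - (i : ℕ)) ((i : ℕ) + 1) (by omega)
    have h := SimpleGraph.dist_le (s.1.copy (vV_b i)
      ((congrArg (vV p p (p + 2))
        (show (i : ℕ) + 1 + ((j : ℕ) - (i : ℕ)) = (j : ℕ) + 1 from by omega)).trans
        (vV_b j)))
    rw [SimpleGraph.Walk.length_copy, s.2] at h
    omega
  · have s := segV hp ((i : ℕ) - (j : ℕ)) ((j : ℕ) + 1) (by omega)
    have h := SimpleGraph.dist_le ((s.1.copy (vV_b j)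
      ((congrArg (vV p p (p + 2))
        (show (j : ℕ) + 1 + ((i : ℕ) - (j : ℕ)) = (i : ℕ) + 1 from by omega)).trans
        (vV_b i))).reverse)
    rw [SimpleGraph.Walk.length_reverse, SimpleGraph.Walk.length_copy, s.2] at h
    have h2 : (thetaGraph p p (p + 2)).dist (ThetaVert.b i) (ThetaVert.b j) =
        (thetaGraph p p (p + 2)).dist (ThetaVert.b j) (ThetaVert.b i) :=
      SimpleGraph.dist_comm
    omega

lemma distCC (hp : 2 ≤ p) (i j : Fin (p + 2 - 1)) :
    (thetaGraph p p (p + 2)).dist (ThetaVert.c i) (ThetaVert.c j) ≤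
      ((i : ℕ) - (j : ℕ)) + ((j : ℕ) - (i : ℕ)) := by
  have hi := i.isLt; have hj := j.isLt
  rcases le_total (i : ℕ) (j : ℕ) with hle | hle
  · have s := segW hp ((j : ℕ) - (i : ℕ)) ((i : ℕ) + 1) (by omega)
    have h := SimpleGraph.dist_le (s.1.copy (wV_c i)
      ((congrArg (wV p p (p + 2))
        (show (i : ℕ) + 1 + ((j : ℕ) - (i : ℕ)) = (j : ℕ) + 1 from by omega)).trans
        (wV_c j)))
    rw [SimpleGraph.Walk.length_copy, s.2] at h
    omega
  · have s := segW hp ((i : ℕ) - (j : ℕ)) ((j : ℕ) + 1) (by omega)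
    have h := SimpleGraph.dist_le ((s.1.copy (wV_c j)
      ((congrArg (wV p p (p + 2))
        (show (j : ℕ) + 1 + ((i : ℕ) - (j : ℕ)) = (i : ℕ) + 1 from by omega)).trans
        (wV_c i))).reverse)
    rw [SimpleGraph.Walk.length_reverse, SimpleGraph.Walk.length_copy, s.2] at h
    have h2 : (thetaGraph p p (p + 2)).dist (ThetaVert.c i) (ThetaVert.c j) =
        (thetaGraph p p (p + 2)).dist (ThetaVert.c j) (ThetaVert.c i) :=
      SimpleGraph.dist_comm
    omega

lemma dist_le_D (hp : 2 ≤ p) (x y : ThetaVert p p (p + 2)) :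
    (thetaGraph p p (p + 2)).dist x y ≤ D p x y := by
  by_cases hpid : pid p x = pid p y
  · rw [D, if_pos hpid]
    cases x <;> cases y <;> simp only [pid] at hpid <;>
      first
        | omega
        | simp [SimpleGraph.dist_self]
        | (rename_i i j
           first
             | (have h3 := distAA hp i j; simp only [dU]; omega)
             | (have h3 := distBB hp i j; simp only [dU]; omega)
             | (have h3 := distCC hp i j; simp only [dU]; omega))
  · rw [D, if_neg hpid]
    exact le_min (bound1 hp x y) (bound2 hp x y)

lemma D_le_length (hp : 2 ≤ p) :
    ∀ {x y : ThetaVert p p (p + 2)} (w : (thetaGraph p p (p + 2)).Walk x y),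
      D p x y ≤ w.length := by
  intro x y w
  induction w with
  | nil => simp [D_self]
  | cons h w ih =>
    exact le_trans (D_lip p hp _ _ _ h) (by simp only [SimpleGraph.Walk.length_cons]; omega)

lemma dist_eq_D (hp : 2 ≤ p) (x y : ThetaVert p p (p + 2)) :
    (thetaGraph p p (p + 2)).dist x y = D p x y := by
  refine le_antisymm (dist_le_D hp x y) ?_
  obtain ⟨w, hw⟩ := (reach hp x y).exists_walk_length_eq_dist
  rw [← hw]
  exact D_le_length hp w


set_option maxHeartbeats 1600000 in
/-- The triple `{w_p, u, u_1}` distinguishes every pair. -/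
lemma key2 (hp : 2 ≤ p) (x x' : ThetaVert p p (p + 2)) (hxx : x ≠ x') :
    D p (.c ⟨p - 1, by omega⟩) x ≠ D p (.c ⟨p - 1, by omega⟩) x' ∨
    D p .u x ≠ D p .u x' ∨
    D p (.a ⟨0, by omega⟩) x ≠ D p (.a ⟨0, by omega⟩) x' := by
  cases x <;> cases x' <;>
    simp_all [D, pid, dU, dV, Fin.ext_iff, -Fin.val_eq_zero_iff] <;> omega

set_option maxHeartbeats 3200000 in
/-- If `a ∉ {u_1, v_1, w_p}` then the triple `{u_1, v_1, a}` distinguishes every pair. -/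
lemma key3 (hp : 2 ≤ p) (a x x' : ThetaVert p p (p + 2))
    (h1 : a ≠ .a ⟨0, by omega⟩) (h2 : a ≠ .b ⟨0, by omega⟩)
    (h3 : a ≠ .c ⟨p - 1, by omega⟩) (hxx : x ≠ x') :
    D p (.a ⟨0, by omega⟩) x ≠ D p (.a ⟨0, by omega⟩) x' ∨
    D p (.b ⟨0, by omega⟩) x ≠ D p (.b ⟨0, by omega⟩) x' ∨
    D p a x ≠ D p a x' := by
  cases a <;> cases x <;> cases x' <;>
    simp_all [D, pid, dU, dV, Fin.ext_iff, -Fin.val_eq_zero_iff] <;> omega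

end ThetaPPP2
/-- in `Θ_{p,p,p+2}` with `p ≥ 2`, every vertex `a` extends to a
vertex metric generator `{a, b, c}` of size three. -/
theorem exists_vertexGenerator_containing_theta_ppp2 (p : ℕ) (hp : 2 ≤ p)
    (a : ThetaVert p p (p + 2)) :
    ∃ b c : ThetaVert p p (p + 2),
      IsVertexMetricGenerator (thetaGraph p p (p + 2)) {a, b, c} := by
  classical
  have hdist := ThetaPPP2.dist_eq_D hp
  by_cases hwp : a = ThetaVert.c ⟨p - 1, by omega⟩
  · refine ⟨ThetaVert.u, ThetaVert.a ⟨0, by omega⟩, ?_⟩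
    intro x x' hxx
    rcases ThetaPPP2.key2 hp x x' hxx with h | h | h
    · exact ⟨a, by simp, by rw [hdist, hdist, hwp]; exact h⟩
    · exact ⟨ThetaVert.u, by simp, by rw [hdist, hdist]; exact h⟩
    · exact ⟨ThetaVert.a ⟨0, by omega⟩, by simp, by rw [hdist, hdist]; exact h⟩
  · by_cases ha0 : a = ThetaVert.a ⟨0, by omega⟩
    · refine ⟨ThetaVert.u, ThetaVert.b ⟨0, by omega⟩, ?_⟩
      intro x x' hxx
      rcases ThetaPPP2.key3 hp ThetaVert.u x x' (by simp) (by simp) (by simp) hxx with h | h | h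
      · exact ⟨a, by simp, by rw [hdist, hdist, ha0]; exact h⟩
      · exact ⟨ThetaVert.b ⟨0, by omega⟩, by simp, by rw [hdist, hdist]; exact h⟩
      · exact ⟨ThetaVert.u, by simp, by rw [hdist, hdist]; exact h⟩
    · by_cases hb0 : a = ThetaVert.b ⟨0, by omega⟩
      · refine ⟨ThetaVert.u, ThetaVert.a ⟨0, by omega⟩, ?_⟩
        intro x x' hxx
        rcases ThetaPPP2.key3 hp ThetaVert.u x x' (by simp) (by simp) (by simp) hxx with h | h | h
        · exact ⟨ThetaVert.a ⟨0, by omega⟩, by simp, by rw [hdist, hdist]; exact h⟩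
        · exact ⟨a, by simp, by rw [hdist, hdist, hb0]; exact h⟩
        · exact ⟨ThetaVert.u, by simp, by rw [hdist, hdist]; exact h⟩
      · refine ⟨ThetaVert.a ⟨0, by omega⟩, ThetaVert.b ⟨0, by omega⟩, ?_⟩
        intro x x' hxx
        rcases ThetaPPP2.key3 hp a x x' ha0 hb0 hwp hxx with h | h | h
        · exact ⟨ThetaVert.a ⟨0, by omega⟩, by simp, by rw [hdist, hdist]; exact h⟩
        · exact ⟨ThetaVert.b ⟨0, by omega⟩, by simp, by rw [hdist, hdist]; exact h⟩
        · exact ⟨a, by simp, by rw [hdist, hdist]; exact h⟩
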